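/- arXiv:2210.07077 — 2 statements merged into one kernel-verified Lean document; each statement's English description precedes it below -/
import Mathlib

section
/- Define ‖X‖_$ := inf over all factorizations X = U V^* (with U ∈ ℝ^{M×r}, V ∈ ℝ^{NK×r}, r arbitrary) of ‖U‖_F · ‖V^*‖_{∞,F}, where V^* is viewed as an r-by-NK matrix partitioned into K blocks of size r×N. Then for every X ∈ ℝ^{M×NK} with rank(X) ≤ r, one has ‖X‖_{∞,F} ≤ ‖X‖_$ ≤ √r · ‖X‖_{∞,F}. -/
open scoped BigOperators

/-- Frobenius norm of a real matrix. -/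
noncomputable def frob {m n : ℕ} (A : Matrix (Fin m) (Fin n) ℝ) : ℝ :=
  Real.sqrt (∑ i, ∑ j, (A i j) ^ 2)

/-- Index of the `j`th column of the `k`th block inside `Fin (N * K)`. -/
def blkIdx {N K : ℕ} (k : Fin K) (j : Fin N) : Fin (N * K) :=
  ⟨j.1 + N * k.1, by
    have hj := j.isLt
    have hk := k.isLt
    calc j.1 + N * k.1 < N + N * k.1 := by omega
      _ = N * (k.1 + 1) := by ring
      _ ≤ N * K := Nat.mul_le_mul_left N hk⟩

/-- The `k`th `M × N` block of an `M × NK` matrix. -/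
noncomputable def blk {M N K : ℕ} (X : Matrix (Fin M) (Fin (N * K)) ℝ) (k : Fin K) :
    Matrix (Fin M) (Fin N) ℝ :=
  Matrix.of fun i j => X i (blkIdx k j)

/-- Maximum-block-Frobenius norm `‖X‖_{∞,F} = max_k ‖X_k‖_F`. -/
noncomputable def bnorm {M N K : ℕ} (X : Matrix (Fin M) (Fin (N * K)) ℝ) : ℝ :=
  ⨆ k : Fin K, frob (blk X k)

/-- The `$`-norm: `inf_{X = U Vᵀ} ‖U‖_F ‖Vᵀ‖_{∞,F}` over factorizations of arbitrary
inner dimension. -/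
noncomputable def dollar {M N K : ℕ} (X : Matrix (Fin M) (Fin (N * K)) ℝ) : ℝ :=
  sInf {t : ℝ | ∃ (r : ℕ) (U : Matrix (Fin M) (Fin r) ℝ)
    (V : Matrix (Fin (N * K)) (Fin r) ℝ),
    X = U * V.transpose ∧ t = frob U * bnorm V.transpose}

lemma frob_nonneg {m n : ℕ} (A : Matrix (Fin m) (Fin n) ℝ) : 0 ≤ frob A :=
  Real.sqrt_nonneg _

lemma bnorm_nonneg {M N K : ℕ} (X : Matrix (Fin M) (Fin (N * K)) ℝ) : 0 ≤ bnorm X := by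
  rcases isEmpty_or_nonempty (Fin K) with h | h
  · simp [bnorm, Real.iSup_of_isEmpty]
  · exact le_ciSup_of_le (Set.Finite.bddAbove (Set.finite_range _)) (Classical.arbitrary _)
      (frob_nonneg _)

lemma frob_blk_le_bnorm {M N K : ℕ} (X : Matrix (Fin M) (Fin (N * K)) ℝ) (k : Fin K) :
    frob (blk X k) ≤ bnorm X := by
  have h := le_ciSup (f := fun k => frob (blk X k))
    (Set.Finite.bddAbove (Set.finite_range _)) k
  simpa [bnorm] using h

lemma bnorm_le {M N K : ℕ} {X : Matrix (Fin M) (Fin (N * K)) ℝ} {t : ℝ} (ht : 0 ≤ t)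
    (h : ∀ k, frob (blk X k) ≤ t) : bnorm X ≤ t := by
  rcases isEmpty_or_nonempty (Fin K) with hK | hK
  · simpa [bnorm, Real.iSup_of_isEmpty] using ht
  · exact ciSup_le h

lemma frob_mul_le {m n p : ℕ} (A : Matrix (Fin m) (Fin n) ℝ) (B : Matrix (Fin n) (Fin p) ℝ) :
    frob (A * B) ≤ frob A * frob B := by
  rw [frob, frob, frob, ← Real.sqrt_mul (by positivity)]
  apply Real.sqrt_le_sqrt
  calc ∑ i, ∑ j, ((A * B) i j) ^ 2
      ≤ ∑ i, ∑ j, (∑ a, A i a ^ 2) * (∑ a, B a j ^ 2) := by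
        refine Finset.sum_le_sum fun i _ => Finset.sum_le_sum fun j _ => ?_
        rw [Matrix.mul_apply]
        exact Finset.sum_mul_sq_le_sq_mul_sq _ _ _
    _ = (∑ i, ∑ a, A i a ^ 2) * ∑ a, ∑ j, B a j ^ 2 := by
        rw [← Finset.sum_mul_sum]
        congr 1
        exact Finset.sum_comm

lemma blk_mul {M N K q : ℕ} (U : Matrix (Fin M) (Fin q) ℝ) (W : Matrix (Fin q) (Fin (N * K)) ℝ)
    (k : Fin K) : blk (U * W) k = U * blk W k := by
  ext i j
  simp [blk, Matrix.mul_apply]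

set_option maxHeartbeats 1000000 in
/-- interlacing inequalities `‖X‖_{∞,F} ≤ ‖X‖_$ ≤ √r ‖X‖_{∞,F}`
for rank-`r` matrices. -/
theorem stmt1 (M N K r : ℕ) (X : Matrix (Fin M) (Fin (N * K)) ℝ) (hr : X.rank ≤ r) :
    bnorm X ≤ dollar X ∧ dollar X ≤ Real.sqrt r * bnorm X := by
  classical
  set S : Submodule ℝ (EuclideanSpace ℝ (Fin M)) :=
    LinearMap.range (Matrix.toEuclideanLin X) with hS
  have hrank : Module.finrank ℝ S = X.rank := by
    rw [Matrix.rank_eq_finrank_range_toLin X (PiLp.basisFun 2 ℝ (Fin M))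
      (PiLp.basisFun 2 ℝ (Fin (N * K)))]
    rfl
  set n := Module.finrank ℝ S with hn
  have hnr : n ≤ r := hrank.le.trans hr
  set b := stdOrthonormalBasis ℝ S with hb
  set U : Matrix (Fin M) (Fin n) ℝ := Matrix.of (fun i a => ((b a : EuclideanSpace ℝ (Fin M)) : Fin M → ℝ) i) with hU
  -- columns of X, as elements of E, lie in S
  have hcol : ∀ j : Fin (N * K), ∃ y : EuclideanSpace ℝ (Fin M), y ∈ S ∧ ∀ i, y i = X i j := by
    intro j
    refine ⟨Matrix.toEuclideanLin X ((WithLp.equiv 2 _).symm (Pi.single j 1)),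
      LinearMap.mem_range_self _ _, fun i => ?_⟩
    rw [Matrix.toEuclideanLin_apply]
    simp [Matrix.mulVec_single]
  -- inner products with basis vectors
  have hinner : ∀ (a : Fin n) (y : EuclideanSpace ℝ (Fin M)),
      (inner ℝ ((b a : EuclideanSpace ℝ (Fin M))) y : ℝ) = ∑ i, U i a * y i := by
    intro a y
    simp [PiLp.inner_apply, RCLike.inner_apply, hU, mul_comm]
  -- Bessel
  have hON : Orthonormal ℝ (fun a : Fin n => ((b a : S) : EuclideanSpace ℝ (Fin M))) := by
    have h := b.orthonormal
    rw [orthonormal_iff_ite] at h ⊢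
    intro a c
    rw [← Submodule.coe_inner]
    exact h a c
  have hBessel : ∀ y : EuclideanSpace ℝ (Fin M), ∑ a : Fin n, (∑ i, U i a * y i) ^ 2 ≤ ∑ i, y i ^ 2 := by
    intro y
    have h1 := hON.sum_inner_products_le (s := Finset.univ) y
    have h2 : (‖y‖ : ℝ) ^ 2 = ∑ i, y i ^ 2 := by
      rw [EuclideanSpace.norm_eq, Real.sq_sqrt (by positivity)]
      simp [sq_abs]
    calc ∑ a : Fin n, (∑ i, U i a * y i) ^ 2
        = ∑ a : Fin n, ‖(inner ℝ ((b a : EuclideanSpace ℝ (Fin M))) y : ℝ)‖ ^ 2 := by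
          refine Finset.sum_congr rfl fun a _ => ?_
          rw [hinner, Real.norm_eq_abs, sq_abs]
      _ ≤ ‖y‖ ^ 2 := h1
      _ = ∑ i, y i ^ 2 := h2
  -- the factorization X = U * Vᵀ
  set V : Matrix (Fin (N * K)) (Fin n) ℝ := X.transpose * U with hV
  have hfact : X = U * V.transpose := by
    ext i j
    obtain ⟨y, hy, hyc⟩ := hcol j
    have hrep := b.sum_repr ⟨y, hy⟩
    have happ : ∀ (w : Fin n → EuclideanSpace ℝ (Fin M)), (∑ a, w a) i = ∑ a, w a i :=
      fun w => map_sum (EuclideanSpace.projₗ (𝕜 := ℝ) i) w Finset.univ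
    have hrep' : ∑ a : Fin n,
        b.repr ⟨y, hy⟩ a * ((b a : S) : EuclideanSpace ℝ (Fin M)) i = y i := by
      have h := congrArg
        (fun z : S => ((z : EuclideanSpace ℝ (Fin M)) : Fin M → ℝ) i) hrep
      simp only [Submodule.coe_sum] at h
      rw [happ] at h
      simpa [smul_eq_mul] using h
    have hr2 : ∀ a : Fin n, b.repr ⟨y, hy⟩ a = ∑ i', U i' a * X i' j := by
      intro a
      rw [b.repr_apply_apply, Submodule.coe_inner, hinner]
      refine Finset.sum_congr rfl fun i' _ => ?_
      rw [show ((⟨y, hy⟩ : S) : EuclideanSpace ℝ (Fin M)) = y from rfl, hyc]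
    rw [Matrix.mul_apply, ← hyc i, ← hrep']
    refine Finset.sum_congr rfl fun a _ => ?_
    have hVt : V.transpose a j = ∑ i', U i' a * X i' j := by
      rw [Matrix.transpose_apply, hV, Matrix.mul_apply]
      exact Finset.sum_congr rfl fun i' _ => by rw [Matrix.transpose_apply, mul_comm]
    rw [hVt, hr2 a]
    exact mul_comm _ _
  -- frob U = sqrt n
  have hfrobU : frob U = Real.sqrt n := by
    rw [frob]
    congr 1
    rw [Finset.sum_comm]
    have key : ∀ a : Fin n, ∑ i, U i a ^ 2 = 1 := by
      intro a
      have h1 : ‖((b a : S) : EuclideanSpace ℝ (Fin M))‖ = 1 := by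
        rw [Submodule.norm_coe]
        exact b.orthonormal.1 a
      have h2 : ∑ i, U i a ^ 2 = ‖((b a : S) : EuclideanSpace ℝ (Fin M))‖ ^ 2 := by
        rw [EuclideanSpace.norm_eq, Real.sq_sqrt (by positivity)]
        exact Finset.sum_congr rfl fun i _ => by rw [Real.norm_eq_abs, sq_abs]; rfl
      rw [h2, h1, one_pow]
    simp [key]
  -- bnorm Vᵀ ≤ bnorm X
  have hbV : bnorm V.transpose ≤ bnorm X := by
    refine bnorm_le (bnorm_nonneg X) fun k => ?_
    refine le_trans ?_ (frob_blk_le_bnorm X k)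
    rw [frob, frob]
    apply Real.sqrt_le_sqrt
    rw [show (∑ i, ∑ j, (blk X k i j) ^ 2) = ∑ j, ∑ i, (blk X k i j) ^ 2 from Finset.sum_comm,
      show (∑ a, ∑ j, (blk V.transpose k a j) ^ 2) = ∑ j, ∑ a, (blk V.transpose k a j) ^ 2
        from Finset.sum_comm]
    refine Finset.sum_le_sum fun j _ => ?_
    obtain ⟨y, hy, hyc⟩ := hcol (blkIdx k j)
    have h1 := hBessel y
    have h2 : ∀ a, blk V.transpose k a j = ∑ i, U i a * y i := by
      intro a
      rw [blk]
      simp only [Matrix.of_apply, Matrix.transpose_apply, hV, Matrix.mul_apply]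
      exact Finset.sum_congr rfl fun i _ => by rw [← hyc i]; exact mul_comm _ _
    calc ∑ a, blk V.transpose k a j ^ 2 = ∑ a, (∑ i, U i a * y i) ^ 2 := by
          exact Finset.sum_congr rfl fun a _ => by rw [h2]
      _ ≤ ∑ i, y i ^ 2 := h1
      _ = ∑ i, blk X k i j ^ 2 := by
          refine Finset.sum_congr rfl fun i _ => ?_
          rw [hyc]; rfl
  -- membership of the constructed factorization
  have hmem : frob U * bnorm V.transpose ∈ {t : ℝ | ∃ (q : ℕ) (U' : Matrix (Fin M) (Fin q) ℝ)
      (V' : Matrix (Fin (N * K)) (Fin q) ℝ),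
      X = U' * V'.transpose ∧ t = frob U' * bnorm V'.transpose} :=
    ⟨n, U, V, hfact, rfl⟩
  have hbdd : BddBelow {t : ℝ | ∃ (q : ℕ) (U' : Matrix (Fin M) (Fin q) ℝ)
      (V' : Matrix (Fin (N * K)) (Fin q) ℝ),
      X = U' * V'.transpose ∧ t = frob U' * bnorm V'.transpose} := by
    refine ⟨0, fun t ht => ?_⟩
    obtain ⟨q, U', V', _, rfl⟩ := ht
    exact mul_nonneg (frob_nonneg _) (bnorm_nonneg _)
  constructor
  · -- lower bound
    rw [dollar]
    refine le_csInf ⟨_, hmem⟩ ?_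
    rintro t ⟨q, U', V', hfac, rfl⟩
    refine bnorm_le (mul_nonneg (frob_nonneg _) (bnorm_nonneg _)) fun k => ?_
    calc frob (blk X k) = frob (U' * blk V'.transpose k) := by rw [hfac, blk_mul]
      _ ≤ frob U' * frob (blk V'.transpose k) := frob_mul_le _ _
      _ ≤ frob U' * bnorm V'.transpose :=
          mul_le_mul_of_nonneg_left (frob_blk_le_bnorm _ k) (frob_nonneg _)
  · -- upper bound
    rw [dollar]
    refine le_trans (csInf_le hbdd hmem) ?_
    rw [hfrobU]
    calc Real.sqrt n * bnorm V.transpose ≤ Real.sqrt n * bnorm X :=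
          mul_le_mul_of_nonneg_left hbV (Real.sqrt_nonneg _)
      _ ≤ Real.sqrt r * bnorm X :=
          mul_le_mul_of_nonneg_right (Real.sqrt_le_sqrt (by exact_mod_cast hnr)) (bnorm_nonneg X)
end

section
/- Let Q ∈ ℝ^{m×n} with Q^*Q positive definite, b ∈ ℝ^m, and for λ ≥ 0 define x(λ) := (Q^*Q + λ I)^{-1} Q^* b. Then the function λ ↦ ‖x(λ)‖_2 is nonincreasing on [0, ∞). -/
open scoped BigOperators
open Matrix

private lemma stmt8_aux (n : ℕ) (A : Matrix (Fin n) (Fin n) ℝ) (c : Fin n → ℝ)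
    (hA : A.PosDef) (l₁ l₂ : ℝ) (hl₁ : 0 ≤ l₁) (hl : l₁ ≤ l₂) :
    ((A + l₂ • 1)⁻¹ *ᵥ c) ⬝ᵥ ((A + l₂ • 1)⁻¹ *ᵥ c) ≤
    ((A + l₁ • 1)⁻¹ *ᵥ c) ⬝ᵥ ((A + l₁ • 1)⁻¹ *ᵥ c) := by
  have hl₂ : (0:ℝ) ≤ l₂ := le_trans hl₁ hl
  set B₁ := A + l₁ • (1 : Matrix (Fin n) (Fin n) ℝ) with hB₁def
  set B₂ := A + l₂ • (1 : Matrix (Fin n) (Fin n) ℝ) with hB₂def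
  have hsm : ∀ l : ℝ, 0 ≤ l → (l • (1 : Matrix (Fin n) (Fin n) ℝ)).PosSemidef := by
    intro l hl
    rw [Matrix.smul_one_eq_diagonal]
    exact Matrix.posSemidef_diagonal_iff.mpr fun i => hl
  have hB₁ : B₁.PosDef := hA.add_posSemidef (hsm l₁ hl₁)
  have hB₂ : B₂.PosDef := hA.add_posSemidef (hsm l₂ hl₂)
  have hu₁ : IsUnit B₁.det := isUnit_iff_isUnit_det _ |>.mp hB₁.isUnit
  have hu₂ : IsUnit B₂.det := isUnit_iff_isUnit_det _ |>.mp hB₂.isUnit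
  have hcomm : B₁ * B₂ = B₂ * B₁ := by
    simp only [hB₁def, hB₂def, add_mul, mul_add, Matrix.smul_mul, Matrix.mul_smul,
      one_mul, mul_one, smul_smul, mul_comm l₂ l₁]
    abel
  have hicomm : B₁⁻¹ * B₂⁻¹ = B₂⁻¹ * B₁⁻¹ := by
    rw [← Matrix.mul_inv_rev, ← Matrix.mul_inv_rev, hcomm]
  obtain ⟨y, hy⟩ : ∃ y, y = B₁⁻¹ *ᵥ (B₂⁻¹ *ᵥ c) := ⟨_, rfl⟩
  have hic : B₂ * B₁⁻¹ = B₁⁻¹ * B₂ := by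
    have h := congrArg (fun M => B₁ * M * B₁⁻¹) hcomm
    simp only [Matrix.mul_assoc] at h
    calc B₂ * B₁⁻¹ = B₁⁻¹ * (B₁ * (B₂ * B₁⁻¹)) := by
          rw [← Matrix.mul_assoc, ← Matrix.mul_assoc, Matrix.nonsing_inv_mul _ hu₁,
            Matrix.one_mul]
      _ = B₁⁻¹ * (B₂ * (B₁ * B₁⁻¹)) := by
          rw [← Matrix.mul_assoc B₁ B₂, hcomm, Matrix.mul_assoc]
      _ = B₁⁻¹ * B₂ := by rw [Matrix.mul_nonsing_inv _ hu₁, Matrix.mul_one]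
  have hm₁ : B₂ * B₁⁻¹ * B₂⁻¹ = B₁⁻¹ := by
    rw [hic, Matrix.mul_assoc, Matrix.mul_nonsing_inv _ hu₂, Matrix.mul_one]
  have hm₂ : B₁ * B₁⁻¹ * B₂⁻¹ = B₂⁻¹ := by
    rw [Matrix.mul_nonsing_inv _ hu₁, Matrix.one_mul]
  have hx₁ : B₁⁻¹ *ᵥ c = B₂ *ᵥ y := by
    rw [hy, mulVec_mulVec, mulVec_mulVec, hm₁]
  have hx₂ : B₂⁻¹ *ᵥ c = B₁ *ᵥ y := by
    rw [hy, mulVec_mulVec, mulVec_mulVec, hm₂]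
  have hsymm : ∀ (B : Matrix (Fin n) (Fin n) ℝ), B.PosDef →
      (B *ᵥ y) ⬝ᵥ (B *ᵥ y) = y ⬝ᵥ (B *ᵥ (B *ᵥ y)) := by
    intro B hB
    have hBt : Bᵀ = B := by
      have := hB.isHermitian
      simpa [Matrix.IsHermitian, Matrix.conjTranspose_eq_transpose_of_trivial] using this
    nth_rewrite 1 [← hBt]
    rw [Matrix.mulVec_transpose, ← Matrix.dotProduct_mulVec]
  have hdiff : B₂ * B₂ - B₁ * B₁ = (l₂ - l₁) • (B₁ + B₂) := by
    simp only [hB₁def, hB₂def, add_mul, mul_add, Matrix.smul_mul, Matrix.mul_smul,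
      one_mul, mul_one, smul_smul, smul_add, sub_smul, smul_sub]
    module
  rw [hx₁, hx₂, hsymm _ hB₂, hsymm _ hB₁]
  have h1 : 0 ≤ y ⬝ᵥ (B₁ *ᵥ y) := by simpa using hB₁.posSemidef.dotProduct_mulVec_nonneg y
  have h2 : 0 ≤ y ⬝ᵥ (B₂ *ᵥ y) := by simpa using hB₂.posSemidef.dotProduct_mulVec_nonneg y
  have e : y ⬝ᵥ (B₂ *ᵥ (B₂ *ᵥ y)) - y ⬝ᵥ (B₁ *ᵥ (B₁ *ᵥ y)) =
      (l₂ - l₁) * (y ⬝ᵥ (B₁ *ᵥ y) + y ⬝ᵥ (B₂ *ᵥ y)) := by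
    rw [mulVec_mulVec, mulVec_mulVec, ← dotProduct_sub, ← Matrix.sub_mulVec, hdiff,
      Matrix.smul_mulVec, dotProduct_smul, Matrix.add_mulVec, dotProduct_add,
      smul_eq_mul]
  nlinarith [mul_nonneg (sub_nonneg.mpr hl) (add_nonneg h1 h2)]

/-- `λ ↦ ‖(QᵀQ + λI)⁻¹ Qᵀ b‖₂` is nonincreasing on `[0, ∞)` when `QᵀQ`
is positive definite. -/
theorem stmt8 (m n : ℕ) (Q : Matrix (Fin m) (Fin n) ℝ) (b : Fin m → ℝ)
    (hQ : (Q.transpose * Q).PosDef) :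
    ∀ l₁ l₂ : ℝ, 0 ≤ l₁ → l₁ ≤ l₂ →
      Real.sqrt (∑ i, (((Q.transpose * Q + l₂ • (1 : Matrix (Fin n) (Fin n) ℝ))⁻¹ *ᵥ
          (Q.transpose *ᵥ b)) i) ^ 2) ≤
      Real.sqrt (∑ i, (((Q.transpose * Q + l₁ • (1 : Matrix (Fin n) (Fin n) ℝ))⁻¹ *ᵥ
          (Q.transpose *ᵥ b)) i) ^ 2) := by
  intro l₁ l₂ hl₁ hl
  apply Real.sqrt_le_sqrt
  have hd : ∀ x : Fin n → ℝ, ∑ i, x i ^ 2 = x ⬝ᵥ x := fun x => by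
    simp [dotProduct, sq]
  rw [hd, hd]
  exact stmt8_aux n (Q.transpose * Q) (Q.transpose *ᵥ b) hQ l₁ l₂ hl₁ hl
end
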